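/- (Proposition: complete form J^{(2ν+1,2)}_ℓ, odd order m = 2ν+1.) Let ν ≥ 1, ℓ ≥ 0. Suppose given smooth totally symmetric tensor fields L_{(2N)i₁...i_r} for odd ranks r ∈ {1,3,…,2ν+1} and N = 0,…,ℓ, and L_{(2N−1)i₁...i_r} for even ranks r ∈ {2,4,…,2ν} and N = 1,…,ℓ, such that: (i) L_{(0)i₁...i_{2ν+1}} is a (2ν+1)-th order generalized Killing tensor, and for ℓ > 0 and N = 1,…,ℓ the tensors L_{(2N)i₁...i_{2ν+1}} = −(1/(2N)) L_{(2N−1)(i₁...i_{2ν}|i_{2ν+1})} are (2ν+1)-th order generalized Killing tensors; (ii) s₀ = L_{(2ℓ)a}Q^a is constant; (iii) for ℓ > 0 and N = 1,…,ℓ: (L_{(2N−2)c}Q^c)_{,i₁} = 2(2N−1) L_{(2N−1)i₁i₂} Q^{i₂} − 2N(2N−1) L_{(2N)i₁}; (iv) for N = 0,…,ℓ and even r ∈ {2,4,…,2ν}: L_{(2N)(i₁...i_{r−1}|i_r)} = (r+1) L_{(2N)i₁...i_r i_{r+1}} Q^{i_{r+1}} − (2N+1) L_{(2N+1)i₁...i_r},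 the last term present only if N < ℓ; (v) for ν > 1, ℓ > 0, N = 1,…,ℓ and odd r ∈ {3,5,…,2ν−1}: L_{(2N−1)(i₁...i_{r−1}|i_r)} = (r+1) L_{(2N−1)i₁...i_r i_{r+1}} Q^{i_{r+1}} − 2N L_{(2N)i₁...i_r}. Then J = Σ_{odd r ≤ 2ν+1} Σ_{N=0}^{ℓ} t^{2N} L_{(2N)i₁...i_r} q̇^{i₁}⋯q̇^{i_r} + Σ_{even r ≤ 2ν} Σ_{N=1}^{ℓ} t^{2N−1} L_{(2N−1)i₁...i_r} q̇^{i₁}⋯q̇^{i_r} + s₀ t^{2ℓ+1}/(2ℓ+1) + Σ_{N=0}^{ℓ−1} (L_{(2N)c}Q^c) t^{2N+1}/(2N+1) is a first integral of q̈^a = −Γ^a_{bc}q̇^bq̇^c − Q^a. -/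

import Mathlib

noncomputable section
open scoped BigOperators

/-- Points of the configuration space `ℝ^D`. -/
abbrev Vec (D : ℕ) := Fin D → ℝ

/-- Connection coefficients: `Conn D Γ` with `Γ q a b c = Γ^a_{bc}(q)`. -/
abbrev Conn (D : ℕ) := Vec D → Fin D → Fin D → Fin D → ℝ

/-- Totally covariant `r`-tensor fields on `ℝ^D`. -/
abbrev Tens (D r : ℕ) := Vec D → (Fin r → Fin D) → ℝ

/-- Partial derivative `∂f/∂q^j`. -/
def pd {D : ℕ} (j : Fin D) (f : Vec D → ℝ) (q : Vec D) : ℝ :=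
  fderiv ℝ f q (Pi.single j 1)

/-- Covariant derivative `T_{i₁...i_r|j}` (the last slot is the derivative index `j`):
`T_{i₁...i_r|j} = ∂T_{i₁...i_r}/∂q^j − Σ_k Γ^s_{i_k j} T_{i₁...s...i_r}`. -/
def covTens {D r : ℕ} (Γ : Conn D) (T : Tens D r) : Tens D (r + 1) :=
  fun q idx =>
    pd (idx (Fin.last r)) (fun p => T p fun k => idx k.castSucc) q
      - ∑ k : Fin r, ∑ s : Fin D,
          Γ q s (idx k.castSucc) (idx (Fin.last r)) *
            T q (Function.update (fun l => idx l.castSucc) k s)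

/-- Symmetrization of a tensor over all of its indices. -/
def symT {D r : ℕ} (T : Tens D r) : Tens D r :=
  fun q idx => (r.factorial : ℝ)⁻¹ * ∑ σ : Equiv.Perm (Fin r), T q (idx ∘ σ)

/-- Totally symmetric tensor field. -/
def IsSymTens {D r : ℕ} (T : Tens D r) : Prop :=
  ∀ (q : Vec D) (idx : Fin r → Fin D) (σ : Equiv.Perm (Fin r)), T q (idx ∘ σ) = T q idx

/-- Smooth tensor field. -/
def SmoothTens {D r : ℕ} (T : Tens D r) : Prop :=
  ∀ idx : Fin r → Fin D, ContDiff ℝ (⊤ : ℕ∞) fun q => T q idx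

/-- Generalized Killing tensor of order `r` for the connection `Γ`:
`T_{(i₁...i_r|i_{r+1})} = 0`. -/
def IsGenKT {D r : ℕ} (Γ : Conn D) (T : Tens D r) : Prop :=
  ∀ q idx, symT (covTens Γ T) q idx = 0

/-- `q, v` solve `q̈^a = -Γ^a_{bc}(q) q̇^b q̇^c - Q^a(q)` on the set `s ⊆ ℝ`. -/
def IsSolutionOn {D : ℕ} (Γ : Conn D) (Q : Vec D → Fin D → ℝ)
    (s : Set ℝ) (q v : ℝ → Vec D) : Prop :=
  ∀ t ∈ s, ∀ a : Fin D,
    HasDerivAt (fun τ => q τ a) (v t a) t ∧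
    HasDerivAt (fun τ => v τ a)
      (-(∑ b, ∑ c, Γ (q t) a b c * v t b * v t c) - Q (q t) a) t

/-- `I(t,q,q̇)` is a first integral of the system: it is constant along every
(C²) solution defined on an open interval. -/
def FirstIntegral {D : ℕ} (Γ : Conn D) (Q : Vec D → Fin D → ℝ)
    (I : ℝ → Vec D → Vec D → ℝ) : Prop :=
  ∀ (a b : ℝ) (q v : ℝ → Vec D), IsSolutionOn Γ Q (Set.Ioo a b) q v →
    ∀ t₁ ∈ Set.Ioo a b, ∀ t₂ ∈ Set.Ioo a b,
      I t₁ (q t₁) (v t₁) = I t₂ (q t₂) (v t₂)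

/-- The contraction `L_c Q^c` of a rank-1 tensor with the generalized forces. -/
def dotQ {D : ℕ} (L : Tens D 1) (Q : Vec D → Fin D → ℝ) (q : Vec D) : ℝ :=
  ∑ c, L q (fun _ => c) * Q q c


section Helpers

lemma hasDerivAt_comp_smooth {D : ℕ} (f : Vec D → ℝ) (hf : ContDiff ℝ (⊤ : ℕ∞) f)
    (q : ℝ → Vec D) (w : Vec D) (t : ℝ)
    (hq : ∀ a, HasDerivAt (fun τ => q τ a) (w a) t) :
    HasDerivAt (fun τ => f (q τ)) (∑ i, pd i f (q t) * w i) t := by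
  have hq' : HasDerivAt q w t := hasDerivAt_pi.2 hq
  have hfd : HasFDerivAt f (fderiv ℝ f (q t)) (q t) :=
    ((hf.differentiable (by simp)) (q t)).hasFDerivAt
  have h := hfd.comp_hasDerivAt t hq'
  refine h.congr_deriv ?_
  symm
  have hw : w = ∑ i, w i • (Pi.single i 1 : Vec D) := by
    ext j
    simp [Pi.single_apply, eq_comm]
  conv_rhs => rw [hw, map_sum]
  simp [pd, mul_comm]

lemma hasDerivAt_prod_v {D r : ℕ} (v : ℝ → Vec D) (w : Vec D) (t : ℝ)
    (hv : ∀ a, HasDerivAt (fun τ => v τ a) (w a) t) (idx : Fin r → Fin D) :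
    HasDerivAt (fun τ => ∏ k : Fin r, v τ (idx k))
      (∑ k : Fin r, (∏ l ∈ Finset.univ.erase k, v t (idx l)) * w (idx k)) t := by
  simpa [smul_eq_mul] using
    HasDerivAt.fun_finsetProd (u := Finset.univ) (f := fun k τ => v τ (idx k))
      (f' := fun k => w (idx k)) (fun k _ => hv (idx k))

-- (K1) contraction with a symmetric power kills the symmetrization
lemma sum_symT_contract {D r : ℕ} (T : Tens D r) (q v : Vec D) :
    ∑ idx : Fin r → Fin D, symT T q idx * ∏ k, v (idx k)
      = ∑ idx : Fin r → Fin D, T q idx * ∏ k, v (idx k) := by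
  have key : ∀ σ : Equiv.Perm (Fin r),
      ∑ idx : Fin r → Fin D, T q (idx ∘ σ) * ∏ k, v (idx k)
        = ∑ idx : Fin r → Fin D, T q idx * ∏ k, v (idx k) := by
    intro σ
    apply Fintype.sum_equiv (σ.symm.arrowCongr (Equiv.refl (Fin D)))
    intro idx
    have h1 : (σ.symm.arrowCongr (Equiv.refl (Fin D))) idx = idx ∘ σ := by
      ext k; simp [Equiv.arrowCongr]
    rw [h1]
    congr 1
    exact (Equiv.prod_comp σ (fun k => v (idx k))).symm
  simp only [symT]
  calc ∑ idx : Fin r → Fin D,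
        ((r.factorial : ℝ)⁻¹ * ∑ σ : Equiv.Perm (Fin r), T q (idx ∘ σ)) * ∏ k, v (idx k)
      = (r.factorial : ℝ)⁻¹ * ∑ idx : Fin r → Fin D,
          ∑ σ : Equiv.Perm (Fin r), T q (idx ∘ σ) * ∏ k, v (idx k) := by
        rw [Finset.mul_sum]
        refine Finset.sum_congr rfl fun idx _ => ?_
        rw [mul_assoc, Finset.sum_mul]
    _ = (r.factorial : ℝ)⁻¹ * ∑ σ : Equiv.Perm (Fin r),
          ∑ idx : Fin r → Fin D, T q (idx ∘ σ) * ∏ k, v (idx k) := by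
        rw [Finset.sum_comm]
    _ = (r.factorial : ℝ)⁻¹ * ∑ _σ : Equiv.Perm (Fin r),
          ∑ idx : Fin r → Fin D, T q idx * ∏ k, v (idx k) := by
        rw [Finset.sum_congr rfl fun σ _ => key σ]
    _ = ∑ idx : Fin r → Fin D, T q idx * ∏ k, v (idx k) := by
        rw [Finset.sum_const, Finset.card_univ]
        simp [Fintype.card_perm, nsmul_eq_mul, ← mul_assoc,
          inv_mul_cancel₀ (by exact_mod_cast Nat.factorial_ne_zero r : ((r.factorial : ℝ)) ≠ 0)]

lemma sum_fun_snoc {D r : ℕ} (F : (Fin (r+1) → Fin D) → ℝ) :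
    ∑ idx : Fin (r+1) → Fin D, F idx
      = ∑ idx : Fin r → Fin D, ∑ j : Fin D, F (Fin.snoc idx j) := by
  rw [← (Fin.snocEquiv (fun _ => Fin D)).sum_comp F, Fintype.sum_prod_type,
    Finset.sum_comm]
  simp [Fin.snocEquiv]

/-- The involutive swap `(idx, s) ↦ (update idx k s, idx k)`. -/
def updEquiv {D r : ℕ} (k : Fin r) : ((Fin r → Fin D) × Fin D) ≃ ((Fin r → Fin D) × Fin D) where
  toFun p := (Function.update p.1 k p.2, p.1 k)
  invFun p := (Function.update p.1 k p.2, p.1 k)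
  left_inv p := by
    ext <;> simp [Function.update_idem]
  right_inv p := by
    ext <;> simp [Function.update_idem]

lemma gamma_reindex {D r : ℕ} (Γ : Conn D) (T : Tens D r) (q v : Vec D) (k : Fin r) :
    ∑ idx : Fin r → Fin D, ∑ s : Fin D, ∑ j : Fin D,
        Γ q s (idx k) j * T q (Function.update idx k s) * ((∏ l : Fin r, v (idx l)) * v j)
      = ∑ idx : Fin r → Fin D, T q idx *
          ((∏ l ∈ Finset.univ.erase k, v (idx l)) * (∑ b, ∑ c, Γ q (idx k) b c * v b * v c)) := by
  have main := Fintype.sum_equiv (updEquiv (D := D) k)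
    (fun p : (Fin r → Fin D) × Fin D => ∑ j : Fin D,
      Γ q p.2 (p.1 k) j * T q (Function.update p.1 k p.2) * ((∏ l : Fin r, v (p.1 l)) * v j))
    (fun p : (Fin r → Fin D) × Fin D => ∑ j : Fin D,
      Γ q (p.1 k) p.2 j * T q p.1 *
        ((∏ l ∈ Finset.univ.erase k, v (p.1 l)) * (v p.2 * v j)))
    (by
      intro p
      refine Finset.sum_congr rfl fun j _ => ?_
      simp only [updEquiv, Equiv.coe_fn_mk, Function.update_self]
      have h1 : (∏ l ∈ Finset.univ.erase k, v (Function.update p.1 k p.2 l))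
          = ∏ l ∈ Finset.univ.erase k, v (p.1 l) := by
        refine Finset.prod_congr rfl fun l hl => ?_
        rw [Function.update_of_ne (Finset.ne_of_mem_erase hl)]
      have h2 : (∏ l : Fin r, v (p.1 l))
          = v (p.1 k) * ∏ l ∈ Finset.univ.erase k, v (p.1 l) :=
        (Finset.mul_prod_erase Finset.univ _ (Finset.mem_univ k)).symm
      rw [h1, h2]
      ring)
  calc ∑ idx : Fin r → Fin D, ∑ s : Fin D, ∑ j : Fin D,
        Γ q s (idx k) j * T q (Function.update idx k s) * ((∏ l : Fin r, v (idx l)) * v j)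
      = ∑ p : (Fin r → Fin D) × Fin D, ∑ j : Fin D,
          Γ q p.2 (p.1 k) j * T q (Function.update p.1 k p.2) *
            ((∏ l : Fin r, v (p.1 l)) * v j) := by
        rw [Fintype.sum_prod_type]
    _ = ∑ p : (Fin r → Fin D) × Fin D, ∑ j : Fin D,
          Γ q (p.1 k) p.2 j * T q p.1 *
            ((∏ l ∈ Finset.univ.erase k, v (p.1 l)) * (v p.2 * v j)) := main
    _ = ∑ idx : Fin r → Fin D, T q idx *
          ((∏ l ∈ Finset.univ.erase k, v (idx l)) * (∑ b, ∑ c, Γ q (idx k) b c * v b * v c)) := by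
        rw [Fintype.sum_prod_type]
        refine Finset.sum_congr rfl fun idx _ => ?_
        simp only [Finset.mul_sum, Finset.sum_mul]
        refine Finset.sum_congr rfl fun b _ => Finset.sum_congr rfl fun c _ => ?_
        ring

-- (K2) contraction of the covariant derivative
lemma sum_cov_contract {D r : ℕ} (Γ : Conn D) (T : Tens D r) (q v : Vec D) :
    ∑ idx : Fin (r+1) → Fin D, covTens Γ T q idx * ∏ k, v (idx k)
      = (∑ idx : Fin r → Fin D, (∑ i, pd i (fun p => T p idx) q * v i) * ∏ k, v (idx k))
        - ∑ k : Fin r, ∑ idx : Fin r → Fin D, T q idx *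
            ((∏ l ∈ Finset.univ.erase k, v (idx l)) *
              (∑ b, ∑ c, Γ q (idx k) b c * v b * v c)) := by
  have hsnoc : ∀ (idx : Fin r → Fin D) (j : Fin D),
      covTens Γ T q (Fin.snoc idx j) = pd j (fun p => T p idx) q
        - ∑ k : Fin r, ∑ s : Fin D, Γ q s (idx k) j * T q (Function.update idx k s) := by
    intro idx j
    have h1 : (fun k : Fin r => (Fin.snoc idx j : Fin (r+1) → Fin D) k.castSucc) = idx := by
      ext k; simp
    simp only [covTens, Fin.snoc_last, h1, Fin.snoc_castSucc]
  have hprod : ∀ (idx : Fin r → Fin D) (j : Fin D),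
      (∏ k : Fin (r+1), v ((Fin.snoc idx j : Fin (r+1) → Fin D) k)) = (∏ k : Fin r, v (idx k)) * v j := by
    intro idx j; rw [Fin.prod_univ_castSucc]; simp
  rw [sum_fun_snoc (fun idx => covTens Γ T q idx * ∏ k, v (idx k))]
  have step : ∀ idx : Fin r → Fin D, ∀ j : Fin D,
      covTens Γ T q (Fin.snoc idx j) * ∏ k : Fin (r+1), v ((Fin.snoc idx j : Fin (r+1) → Fin D) k)
        = pd j (fun p => T p idx) q * v j * ∏ k, v (idx k)
          - ∑ k : Fin r, ∑ s : Fin D,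
              Γ q s (idx k) j * T q (Function.update idx k s) * ((∏ l, v (idx l)) * v j) := by
    intro idx j
    rw [hsnoc, hprod, sub_mul, Finset.sum_mul]
    congr 1
    · ring
    · exact Finset.sum_congr rfl fun k _ => by rw [Finset.sum_mul]
  calc ∑ idx : Fin r → Fin D, ∑ j : Fin D,
        covTens Γ T q (Fin.snoc idx j) * ∏ k : Fin (r+1), v ((Fin.snoc idx j : Fin (r+1) → Fin D) k)
      = ∑ idx : Fin r → Fin D, ∑ j : Fin D,
          (pd j (fun p => T p idx) q * v j * ∏ k, v (idx k)
            - ∑ k : Fin r, ∑ s : Fin D,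
                Γ q s (idx k) j * T q (Function.update idx k s) * ((∏ l, v (idx l)) * v j)) := by
        exact Finset.sum_congr rfl fun idx _ => Finset.sum_congr rfl fun j _ => step idx j
    _ = (∑ idx : Fin r → Fin D, (∑ i, pd i (fun p => T p idx) q * v i) * ∏ k, v (idx k))
        - ∑ idx : Fin r → Fin D, ∑ j : Fin D, ∑ k : Fin r, ∑ s : Fin D,
            Γ q s (idx k) j * T q (Function.update idx k s) * ((∏ l, v (idx l)) * v j) := by
        rw [← Finset.sum_sub_distrib]
        refine Finset.sum_congr rfl fun idx _ => ?_
        rw [Finset.sum_sub_distrib, Finset.sum_mul]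
    _ = (∑ idx : Fin r → Fin D, (∑ i, pd i (fun p => T p idx) q * v i) * ∏ k, v (idx k))
        - ∑ k : Fin r, ∑ idx : Fin r → Fin D, T q idx *
            ((∏ l ∈ Finset.univ.erase k, v (idx l)) *
              (∑ b, ∑ c, Γ q (idx k) b c * v b * v c)) := by
        congr 1
        calc ∑ idx : Fin r → Fin D, ∑ j : Fin D, ∑ k : Fin r, ∑ s : Fin D,
              Γ q s (idx k) j * T q (Function.update idx k s) * ((∏ l, v (idx l)) * v j)
            = ∑ k : Fin r, ∑ idx : Fin r → Fin D, ∑ s : Fin D, ∑ j : Fin D,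
                Γ q s (idx k) j * T q (Function.update idx k s) * ((∏ l, v (idx l)) * v j) := by
              have h₁ : ∀ idx : Fin r → Fin D,
                  (∑ j : Fin D, ∑ k : Fin r, ∑ s : Fin D,
                    Γ q s (idx k) j * T q (Function.update idx k s) * ((∏ l, v (idx l)) * v j))
                  = ∑ k : Fin r, ∑ s : Fin D, ∑ j : Fin D,
                    Γ q s (idx k) j * T q (Function.update idx k s) * ((∏ l, v (idx l)) * v j) := by
                intro idx
                rw [Finset.sum_comm]
                exact Finset.sum_congr rfl fun k _ => Finset.sum_comm
              rw [Finset.sum_congr rfl fun idx _ => h₁ idx]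
              exact Finset.sum_comm
          _ = ∑ k : Fin r, ∑ idx : Fin r → Fin D, T q idx *
                ((∏ l ∈ Finset.univ.erase k, v (idx l)) *
                  (∑ b, ∑ c, Γ q (idx k) b c * v b * v c)) :=
              Finset.sum_congr rfl fun k _ => gamma_reindex Γ T q v k

lemma erase_last_eq_map (r : ℕ) :
    (Finset.univ.erase (Fin.last r)) = Finset.univ.map (Fin.castSuccEmb) := by
  ext x
  simp only [Finset.mem_erase, Finset.mem_univ, and_true, Finset.mem_map,
    Fin.coe_castSuccEmb, true_and]
  exact (Fin.exists_castSucc_eq (i := x)).symm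

lemma prod_erase_last_snoc {D r : ℕ} (v : Vec D) (idx : Fin r → Fin D) (m : Fin D) :
    (∏ l ∈ Finset.univ.erase (Fin.last r), v ((Fin.snoc idx m : Fin (r+1) → Fin D) l))
      = ∏ l : Fin r, v (idx l) := by
  rw [erase_last_eq_map, Finset.prod_map]
  refine Finset.prod_congr rfl fun l _ => ?_
  rw [show Fin.castSuccEmb l = Fin.castSucc l from rfl, Fin.snoc_castSucc]

-- (K3) contraction of the force term, using symmetry
lemma sum_Q_contract {D r : ℕ} (T : Tens D (r+1)) (hsym : IsSymTens T) (q v : Vec D)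
    (w : Fin D → ℝ) :
    ∑ k : Fin (r+1), ∑ idx : Fin (r+1) → Fin D,
        T q idx * ((∏ l ∈ Finset.univ.erase k, v (idx l)) * w (idx k))
      = ((r : ℝ)+1) * ∑ idx : Fin r → Fin D, ∑ m : Fin D,
          T q (Fin.snoc idx m) * w m * ∏ l : Fin r, v (idx l) := by
  have hlast : ∀ k : Fin (r+1),
      (∑ idx : Fin (r+1) → Fin D,
        T q idx * ((∏ l ∈ Finset.univ.erase k, v (idx l)) * w (idx k)))
      = ∑ idx : Fin (r+1) → Fin D,
        T q idx * ((∏ l ∈ Finset.univ.erase (Fin.last r), v (idx l)) * w (idx (Fin.last r))) := by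
    intro k
    set σ : Equiv.Perm (Fin (r+1)) := Equiv.swap k (Fin.last r) with hσ
    have hmap : (Finset.univ.erase (Fin.last r)).map σ.toEmbedding = Finset.univ.erase k := by
      ext x
      simp only [Finset.mem_map, Finset.mem_erase, Finset.mem_univ, and_true,
        Equiv.coe_toEmbedding]
      constructor
      · rintro ⟨l, hl, rfl⟩
        intro hx
        apply hl
        have : σ (σ l) = σ k := by rw [hx]
        simpa [hσ, Equiv.swap_apply_left] using this
      · intro hx
        refine ⟨σ x, ?_, σ.apply_symm_apply x ▸ ?_⟩
        · intro h
          apply hx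
          have : σ (σ x) = σ (Fin.last r) := by rw [h]
          simpa [hσ, Equiv.swap_apply_right] using this
        · simp [hσ]
    refine Fintype.sum_equiv (σ.symm.arrowCongr (Equiv.refl (Fin D))) _ _ ?_
    intro idx
    have h1 : (σ.symm.arrowCongr (Equiv.refl (Fin D))) idx = idx ∘ σ := by
      ext l; simp [Equiv.arrowCongr]
    rw [h1]
    have h2 : T q (idx ∘ σ) = T q idx := hsym q idx σ
    have h3 : (idx ∘ σ) (Fin.last r) = idx k := by simp [hσ, Equiv.swap_apply_right]
    have h4 : (∏ l ∈ Finset.univ.erase (Fin.last r), v ((idx ∘ σ) l))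
        = ∏ l ∈ Finset.univ.erase k, v (idx l) := by
      rw [← hmap, Finset.prod_map]
      rfl
    rw [h2, h3, h4]
  rw [Finset.sum_congr rfl fun k _ => hlast k, Finset.sum_const, Finset.card_univ]
  rw [sum_fun_snoc (fun idx => T q idx *
    ((∏ l ∈ Finset.univ.erase (Fin.last r), v (idx l)) * w (idx (Fin.last r))))]
  simp only [Fintype.card_fin, nsmul_eq_mul, Nat.cast_add, Nat.cast_one]
  congr 1
  refine Finset.sum_congr rfl fun idx _ => Finset.sum_congr rfl fun m _ => ?_
  rw [prod_erase_last_snoc]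
  simp [Fin.snoc_last]
  ring

lemma master (t : ℝ) (ν ℓ : ℕ) (A B : ℕ → ℕ → ℝ)
    (hA1 : ∀ j, A (2*ℓ+1) (2*j+2) = 0)
    (hAtop : ∀ N, A N (2*ν+2) = 0)
    (hBtop2 : ∀ N, B N (2*ν+2) = 0)
    (hBtop1 : ∀ N, B N (2*ν+1) = 0) :
    (∑ j ∈ Finset.range (ν+1), ∑ N ∈ Finset.range (ℓ+1),
      (((2*N : ℕ) : ℝ) * t^(2*N-1) * A (2*N) (2*j+1)
        + t^(2*N) * (((2*j+3 : ℕ) : ℝ) * B (2*N) (2*j+2)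
            - (2*(N:ℝ)+1) * A (2*N+1) (2*j+2)
            - ((2*j+1 : ℕ) : ℝ) * B (2*N) (2*j))))
    + (∑ j ∈ Finset.range ν, ∑ M ∈ Finset.range ℓ,
      ((2*(M:ℝ)+1) * t^(2*M) * A (2*M+1) (2*j+2)
        + t^(2*M+1) * (((2*j+4 : ℕ) : ℝ) * B (2*M+1) (2*j+3)
            - (2*(M:ℝ)+2) * A (2*M+2) (2*j+3)
            - ((2*j+2 : ℕ) : ℝ) * B (2*M+1) (2*j+1))))
    + B (2*ℓ) 0 * t^(2*ℓ)
    + (∑ M ∈ Finset.range ℓ,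
        (2 * t^(2*M+1) * B (2*M+1) 1 - (2*(M:ℝ)+2) * t^(2*M+1) * A (2*M+2) 1
          + t^(2*M) * B (2*M) 0)) = 0 := by
  -- Split the first double sum into four pieces
  have hX1 : (∑ j ∈ Finset.range (ν+1), ∑ N ∈ Finset.range (ℓ+1),
      (((2*N : ℕ) : ℝ) * t^(2*N-1) * A (2*N) (2*j+1)
        + t^(2*N) * (((2*j+3 : ℕ) : ℝ) * B (2*N) (2*j+2)
            - (2*(N:ℝ)+1) * A (2*N+1) (2*j+2)
            - ((2*j+1 : ℕ) : ℝ) * B (2*N) (2*j))))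
      = (∑ M ∈ Finset.range ℓ, (2*(M:ℝ)+2) * t^(2*M+1) *
            (∑ j ∈ Finset.range (ν+1), A (2*M+2) (2*j+1)))
        - (∑ N ∈ Finset.range (ℓ+1), t^(2*N) * B (2*N) 0)
        - (∑ M ∈ Finset.range ℓ, (2*(M:ℝ)+1) * t^(2*M) *
            (∑ j ∈ Finset.range ν, A (2*M+1) (2*j+2))) := by
    rw [Finset.sum_comm]
    have inner : ∀ N, (∑ j ∈ Finset.range (ν+1),
        (((2*N : ℕ) : ℝ) * t^(2*N-1) * A (2*N) (2*j+1)
          + t^(2*N) * (((2*j+3 : ℕ) : ℝ) * B (2*N) (2*j+2)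
              - (2*(N:ℝ)+1) * A (2*N+1) (2*j+2)
              - ((2*j+1 : ℕ) : ℝ) * B (2*N) (2*j))))
        = ((2*N : ℕ) : ℝ) * t^(2*N-1) * (∑ j ∈ Finset.range (ν+1), A (2*N) (2*j+1))
          - t^(2*N) * B (2*N) 0
          - (2*(N:ℝ)+1) * t^(2*N) * (∑ j ∈ Finset.range ν, A (2*N+1) (2*j+2)) := by
      intro N
      have tele := Finset.sum_range_sub
        (fun j => ((2*j+1 : ℕ) : ℝ) * (t^(2*N) * B (2*N) (2*j))) (ν+1)
      have e1 : ∀ j ∈ Finset.range (ν+1),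
          (((2*N : ℕ) : ℝ) * t^(2*N-1) * A (2*N) (2*j+1)
            + t^(2*N) * (((2*j+3 : ℕ) : ℝ) * B (2*N) (2*j+2)
                - (2*(N:ℝ)+1) * A (2*N+1) (2*j+2)
                - ((2*j+1 : ℕ) : ℝ) * B (2*N) (2*j)))
          = ((2*N : ℕ) : ℝ) * t^(2*N-1) * A (2*N) (2*j+1)
            + ((((2*(j+1)+1 : ℕ) : ℝ) * (t^(2*N) * B (2*N) (2*(j+1)))
               - ((2*j+1 : ℕ) : ℝ) * (t^(2*N) * B (2*N) (2*j)))
               - (2*(N:ℝ)+1) * t^(2*N) * A (2*N+1) (2*j+2)) := by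
        intro j _
        have h2 : (2*(j+1)+1 : ℕ) = 2*j+3 := by ring
        have h3 : (2*(j+1) : ℕ) = 2*j+2 := by ring
        rw [h2, h3]
        push_cast
        ring
      rw [Finset.sum_congr rfl e1, Finset.sum_add_distrib, Finset.sum_sub_distrib, tele]
      have h4 : (2*(ν+1) : ℕ) = 2*ν+2 := by ring
      rw [h4, hBtop2, Finset.sum_range_succ (fun j => (2*(N:ℝ)+1) * t^(2*N) * A (2*N+1) (2*j+2)) ν,
        hAtop, ← Finset.mul_sum, ← Finset.mul_sum]
      push_cast
      ring
    rw [Finset.sum_congr rfl (fun N _ => inner N), Finset.sum_sub_distrib,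
      Finset.sum_sub_distrib]
    congr 1
    · congr 1
      · rw [Finset.sum_range_succ']
        have e2 : ∀ M ∈ Finset.range ℓ,
            ((2*(M+1) : ℕ) : ℝ) * t^(2*(M+1)-1) *
              (∑ j ∈ Finset.range (ν+1), A (2*(M+1)) (2*j+1))
            = (2*(M:ℝ)+2) * t^(2*M+1) * (∑ j ∈ Finset.range (ν+1), A (2*M+2) (2*j+1)) := by
          intro M _
          have h5 : (2*(M+1) : ℕ) = 2*M+2 := by ring
          have h6 : 2*(M+1)-1 = 2*M+1 := by omega
          rw [h5]
          rw [show (2*M+2-1 : ℕ) = 2*M+1 from by omega]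
          push_cast
          ring
        rw [Finset.sum_congr rfl e2]
        simp
    · rw [Finset.sum_range_succ]
      have h7 : (∑ j ∈ Finset.range ν, A (2*ℓ+1) (2*j+2)) = 0 :=
        Finset.sum_eq_zero fun j _ => hA1 j
      rw [h7, mul_zero, add_zero]
  have hX2 : (∑ j ∈ Finset.range ν, ∑ M ∈ Finset.range ℓ,
      ((2*(M:ℝ)+1) * t^(2*M) * A (2*M+1) (2*j+2)
        + t^(2*M+1) * (((2*j+4 : ℕ) : ℝ) * B (2*M+1) (2*j+3)
            - (2*(M:ℝ)+2) * A (2*M+2) (2*j+3)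
            - ((2*j+2 : ℕ) : ℝ) * B (2*M+1) (2*j+1))))
      = (∑ M ∈ Finset.range ℓ, (2*(M:ℝ)+1) * t^(2*M) *
            (∑ j ∈ Finset.range ν, A (2*M+1) (2*j+2)))
        - (∑ M ∈ Finset.range ℓ, 2 * t^(2*M+1) * B (2*M+1) 1)
        - (∑ M ∈ Finset.range ℓ, (2*(M:ℝ)+2) * t^(2*M+1) *
            ((∑ j ∈ Finset.range (ν+1), A (2*M+2) (2*j+1)) - A (2*M+2) 1)) := by
    rw [Finset.sum_comm]
    have inner : ∀ M : ℕ, (∑ j ∈ Finset.range ν,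
        ((2*(M:ℝ)+1) * t^(2*M) * A (2*M+1) (2*j+2)
          + t^(2*M+1) * (((2*j+4 : ℕ) : ℝ) * B (2*M+1) (2*j+3)
              - (2*(M:ℝ)+2) * A (2*M+2) (2*j+3)
              - ((2*j+2 : ℕ) : ℝ) * B (2*M+1) (2*j+1))))
        = (2*(M:ℝ)+1) * t^(2*M) * (∑ j ∈ Finset.range ν, A (2*M+1) (2*j+2))
          - 2 * t^(2*M+1) * B (2*M+1) 1
          - (2*(M:ℝ)+2) * t^(2*M+1) *
              ((∑ j ∈ Finset.range (ν+1), A (2*M+2) (2*j+1)) - A (2*M+2) 1) := by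
      intro M
      have tele := Finset.sum_range_sub
        (fun j => ((2*j+2 : ℕ) : ℝ) * (t^(2*M+1) * B (2*M+1) (2*j+1))) ν
      have e1 : ∀ j ∈ Finset.range ν,
          ((2*(M:ℝ)+1) * t^(2*M) * A (2*M+1) (2*j+2)
            + t^(2*M+1) * (((2*j+4 : ℕ) : ℝ) * B (2*M+1) (2*j+3)
                - (2*(M:ℝ)+2) * A (2*M+2) (2*j+3)
                - ((2*j+2 : ℕ) : ℝ) * B (2*M+1) (2*j+1)))
          = (2*(M:ℝ)+1) * t^(2*M) * A (2*M+1) (2*j+2)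
            + ((((2*(j+1)+2 : ℕ) : ℝ) * (t^(2*M+1) * B (2*M+1) (2*(j+1)+1))
               - ((2*j+2 : ℕ) : ℝ) * (t^(2*M+1) * B (2*M+1) (2*j+1)))
               - (2*(M:ℝ)+2) * t^(2*M+1) * A (2*M+2) (2*j+3)) := by
        intro j _
        have h2 : (2*(j+1)+2 : ℕ) = 2*j+4 := by ring
        have h3 : (2*(j+1)+1 : ℕ) = 2*j+3 := by ring
        rw [h2, h3]
        push_cast
        ring
      rw [Finset.sum_congr rfl e1, Finset.sum_add_distrib, Finset.sum_sub_distrib, tele]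
      have h4 : (2*ν+1 : ℕ) = 2*ν+1 := rfl
      rw [hBtop1, ← Finset.mul_sum, ← Finset.mul_sum]
      have h8 : (∑ j ∈ Finset.range ν, A (2*M+2) (2*j+3))
          = (∑ j ∈ Finset.range (ν+1), A (2*M+2) (2*j+1)) - A (2*M+2) 1 := by
        rw [Finset.sum_range_succ' (fun j => A (2*M+2) (2*j+1)) ν]
        have e3 : ∀ j ∈ Finset.range ν, A (2*M+2) (2*(j+1)+1) = A (2*M+2) (2*j+3) := by
          intro j _
          have : (2*(j+1)+1 : ℕ) = 2*j+3 := by ring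
          rw [this]
        rw [Finset.sum_congr rfl e3]
        simp
      rw [h8]
      push_cast
      ring
    rw [Finset.sum_congr rfl (fun M _ => inner M), Finset.sum_sub_distrib,
      Finset.sum_sub_distrib]
  rw [hX1, hX2, Finset.sum_range_succ]
  have hX4 : (∑ M ∈ Finset.range ℓ,
      (2 * t^(2*M+1) * B (2*M+1) 1 - (2*(M:ℝ)+2) * t^(2*M+1) * A (2*M+2) 1
        + t^(2*M) * B (2*M) 0))
      = (∑ M ∈ Finset.range ℓ, 2 * t^(2*M+1) * B (2*M+1) 1)
        - (∑ M ∈ Finset.range ℓ, (2*(M:ℝ)+2) * t^(2*M+1) * A (2*M+2) 1)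
        + (∑ M ∈ Finset.range ℓ, t^(2*M) * B (2*M) 0) := by
    rw [Finset.sum_add_distrib, Finset.sum_sub_distrib]
  rw [hX4]
  have key : ∀ M ∈ Finset.range ℓ,
      ((2*(M:ℝ)+2) * t^(2*M+1) * (∑ j ∈ Finset.range (ν+1), A (2*M+2) (2*j+1)))
        - ((2*(M:ℝ)+1) * t^(2*M) * (∑ j ∈ Finset.range ν, A (2*M+1) (2*j+2)))
        + ((2*(M:ℝ)+1) * t^(2*M) * (∑ j ∈ Finset.range ν, A (2*M+1) (2*j+2))
            - 2 * t^(2*M+1) * B (2*M+1) 1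
            - (2*(M:ℝ)+2) * t^(2*M+1) *
              ((∑ j ∈ Finset.range (ν+1), A (2*M+2) (2*j+1)) - A (2*M+2) 1))
        + (2 * t^(2*M+1) * B (2*M+1) 1 - (2*(M:ℝ)+2) * t^(2*M+1) * A (2*M+2) 1
            + t^(2*M) * B (2*M) 0)
        + (- (t^(2*M) * B (2*M) 0)) = 0 := by
    intro M _; ring
  have hsum := Finset.sum_eq_zero key
  simp only [Finset.sum_add_distrib, Finset.sum_sub_distrib, Finset.sum_neg_distrib] at hsum
  linear_combination hsum

/-- Contraction of a rank-`r` tensor with `v^r`. -/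
def WT {D r : ℕ} (T : Tens D r) (q v : Vec D) : ℝ :=
  ∑ idx : Fin r → Fin D, T q idx * ∏ k, v (idx k)

/-- Contraction of a rank-`(r+1)` tensor with `Q` and `v^r`. -/
def BT {D r : ℕ} (T : Tens D (r+1)) (Q : Vec D → Fin D → ℝ) (q v : Vec D) : ℝ :=
  ∑ idx : Fin r → Fin D, ∑ m, T q (Fin.snoc idx m) * Q q m * ∏ k : Fin r, v (idx k)

/-- Contraction of the covariant derivative with `v^{r+1}`. -/
def CT {D r : ℕ} (Γ : Conn D) (T : Tens D r) (q v : Vec D) : ℝ :=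
  ∑ idx : Fin (r+1) → Fin D, covTens Γ T q idx * ∏ k, v (idx k)

lemma WT_of_zero {D r : ℕ} (T : Tens D r) (hT : T = fun _ _ => 0) (q v : Vec D) :
    WT T q v = 0 := by
  simp [WT, hT]

lemma BT_of_zero {D r : ℕ} (T : Tens D (r+1)) (hT : T = fun _ _ => 0)
    (Q : Vec D → Fin D → ℝ) (q v : Vec D) : BT T Q q v = 0 := by
  simp [BT, hT]

lemma CT_eq_symT {D r : ℕ} (Γ : Conn D) (T : Tens D r) (q v : Vec D) :
    CT Γ T q v = ∑ idx : Fin (r+1) → Fin D, symT (covTens Γ T) q idx * ∏ k, v (idx k) :=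
  (sum_symT_contract (covTens Γ T) q v).symm

lemma term_hasDerivAt {D r : ℕ} (Γ : Conn D) (Qf : Vec D → Fin D → ℝ) (T : Tens D r)
    (hT : SmoothTens T) (p : ℕ) (q v : ℝ → Vec D) (t : ℝ)
    (hq : ∀ a, HasDerivAt (fun τ => q τ a) (v t a) t)
    (hv : ∀ a, HasDerivAt (fun τ => v τ a)
      (-(∑ b, ∑ c, Γ (q t) a b c * v t b * v t c) - Qf (q t) a) t) :
    HasDerivAt (fun τ => τ^p * WT T (q τ) (v τ))
      (((p : ℕ) : ℝ) * t^(p-1) * WT T (q t) (v t)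
        + t^p * (CT Γ T (q t) (v t)
          - ∑ k : Fin r, ∑ idx : Fin r → Fin D, T (q t) idx *
              ((∏ l ∈ Finset.univ.erase k, v t (idx l)) * Qf (q t) (idx k)))) t := by
  have hW : HasDerivAt (fun τ => WT T (q τ) (v τ))
      (∑ idx : Fin r → Fin D,
        ((∑ i, pd i (fun p => T p idx) (q t) * v t i) * ∏ k, v t (idx k)
          + T (q t) idx * ∑ k : Fin r, (∏ l ∈ Finset.univ.erase k, v t (idx l)) *
              (-(∑ b, ∑ c, Γ (q t) (idx k) b c * v t b * v t c) - Qf (q t) (idx k)))) t := by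
    apply HasDerivAt.fun_sum
    intro idx _
    exact (hasDerivAt_comp_smooth _ (hT idx) q (v t) t hq).mul
      (hasDerivAt_prod_v v _ t hv idx)
  have := (hasDerivAt_pow p t).mul hW
  refine this.congr_deriv ?_
  symm
  have hDW : (∑ idx : Fin r → Fin D,
        ((∑ i, pd i (fun p => T p idx) (q t) * v t i) * ∏ k, v t (idx k)
          + T (q t) idx * ∑ k : Fin r, (∏ l ∈ Finset.univ.erase k, v t (idx l)) *
              (-(∑ b, ∑ c, Γ (q t) (idx k) b c * v t b * v t c) - Qf (q t) (idx k))))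
      = (∑ idx : Fin r → Fin D,
          (∑ i, pd i (fun p => T p idx) (q t) * v t i) * ∏ k, v t (idx k))
        - (∑ idx : Fin r → Fin D, ∑ k : Fin r, T (q t) idx *
            ((∏ l ∈ Finset.univ.erase k, v t (idx l)) *
              (∑ b, ∑ c, Γ (q t) (idx k) b c * v t b * v t c)))
        - (∑ idx : Fin r → Fin D, ∑ k : Fin r, T (q t) idx *
            ((∏ l ∈ Finset.univ.erase k, v t (idx l)) * Qf (q t) (idx k))) := by
    have e : ∀ idx ∈ (Finset.univ : Finset (Fin r → Fin D)),
        ((∑ i, pd i (fun p => T p idx) (q t) * v t i) * ∏ k, v t (idx k)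
          + T (q t) idx * ∑ k : Fin r, (∏ l ∈ Finset.univ.erase k, v t (idx l)) *
              (-(∑ b, ∑ c, Γ (q t) (idx k) b c * v t b * v t c) - Qf (q t) (idx k)))
        = (∑ i, pd i (fun p => T p idx) (q t) * v t i) * ∏ k, v t (idx k)
          - (∑ k : Fin r, T (q t) idx * ((∏ l ∈ Finset.univ.erase k, v t (idx l)) *
              (∑ b, ∑ c, Γ (q t) (idx k) b c * v t b * v t c)))
          - (∑ k : Fin r, T (q t) idx * ((∏ l ∈ Finset.univ.erase k, v t (idx l)) *
              Qf (q t) (idx k))) := by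
      intro idx _
      rw [Finset.mul_sum, sub_sub, ← Finset.sum_add_distrib, sub_eq_add_neg,
        ← Finset.sum_neg_distrib]
      congr 1
      refine Finset.sum_congr rfl fun k _ => ?_
      ring
    rw [Finset.sum_congr rfl e, Finset.sum_sub_distrib, Finset.sum_sub_distrib]
  have swap1 : (∑ idx : Fin r → Fin D, ∑ k : Fin r, T (q t) idx *
        ((∏ l ∈ Finset.univ.erase k, v t (idx l)) *
          (∑ b, ∑ c, Γ (q t) (idx k) b c * v t b * v t c)))
      = ∑ k : Fin r, ∑ idx : Fin r → Fin D, T (q t) idx *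
        ((∏ l ∈ Finset.univ.erase k, v t (idx l)) *
          (∑ b, ∑ c, Γ (q t) (idx k) b c * v t b * v t c)) := Finset.sum_comm
  have swap2 : (∑ idx : Fin r → Fin D, ∑ k : Fin r, T (q t) idx *
        ((∏ l ∈ Finset.univ.erase k, v t (idx l)) * Qf (q t) (idx k)))
      = ∑ k : Fin r, ∑ idx : Fin r → Fin D, T (q t) idx *
        ((∏ l ∈ Finset.univ.erase k, v t (idx l)) * Qf (q t) (idx k)) := Finset.sum_comm
  rw [hDW, swap1, swap2, CT, sum_cov_contract Γ T (q t) (v t)]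

lemma sum_fin_one {D : ℕ} (f : (Fin 1 → Fin D) → ℝ) :
    ∑ idx : Fin 1 → Fin D, f idx = ∑ i : Fin D, f (fun _ => i) := by
  apply Fintype.sum_equiv (Equiv.funUnique (Fin 1) (Fin D))
  intro idx
  congr 1
  funext x
  have hx : x = default := by
    have h := x.isLt
    exact Fin.ext (by omega)
  rw [hx]
  rfl

lemma snoc_fin_zero {D : ℕ} (idx : Fin 0 → Fin D) (m : Fin D) :
    (Fin.snoc idx m : Fin 1 → Fin D) = fun _ => m := by
  funext i
  have : i = Fin.last 0 := by
    have h := i.isLt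
    exact Fin.ext (by simp)
  rw [this, Fin.snoc_last]

lemma BT_zero_eq_dotQ {D : ℕ} (T : Tens D 1) (Q : Vec D → Fin D → ℝ) (q v : Vec D) :
    BT (r := 0) T Q q v = dotQ T Q q := by
  unfold BT dotQ
  rw [Finset.sum_eq_single (fun x : Fin 0 => x.elim0)]
  · refine Finset.sum_congr rfl fun m _ => ?_
    rw [snoc_fin_zero]
    simp
  · intro idx _ hne
    exact absurd (funext fun x => x.elim0) hne
  · intro h
    exact absurd (Finset.mem_univ _) h

lemma snoc_one_eq {D : ℕ} (i m : Fin D) :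
    (Fin.snoc (fun _ => i : Fin 1 → Fin D) m : Fin 2 → Fin D) = ![i, m] := by
  funext k
  fin_cases k
  · simp [Fin.snoc]
  · simp [Fin.snoc]

lemma BT_one_eq {D : ℕ} (T : Tens D 2) (Q : Vec D → Fin D → ℝ) (q v : Vec D) :
    BT (r := 1) T Q q v = ∑ i, (∑ m, T q ![i, m] * Q q m) * v i := by
  unfold BT
  rw [sum_fin_one (fun idx => ∑ m, T q (Fin.snoc idx m) * Q q m * ∏ k : Fin 1, v (idx k))]
  refine Finset.sum_congr rfl fun i _ => ?_
  rw [Finset.sum_mul]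
  refine Finset.sum_congr rfl fun m _ => ?_
  rw [snoc_one_eq]
  simp

lemma WT_one_eq {D : ℕ} (T : Tens D 1) (q v : Vec D) :
    WT T q v = ∑ i, T q (fun _ => i) * v i := by
  unfold WT
  rw [sum_fin_one (fun idx => T q idx * ∏ k : Fin 1, v (idx k))]
  simp

lemma contDiff_dotQ {D : ℕ} (T : Tens D 1) (Q : Vec D → Fin D → ℝ)
    (hT : SmoothTens T) (hQ : ∀ a, ContDiff ℝ (⊤ : ℕ∞) fun q => Q q a) :
    ContDiff ℝ (⊤ : ℕ∞) (dotQ T Q) := by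
  unfold dotQ
  exact ContDiff.sum fun c _ => (hT (fun _ => c)).mul (hQ c)

lemma sum_reshape {D r : ℕ} (s : Finset ℕ) (c : ℕ → ℝ) (Ts : ℕ → Tens D r) (q v : Vec D) :
    (∑ idx : Fin r → Fin D, (∑ N ∈ s, c N * Ts N q idx) * ∏ k, v (idx k))
      = ∑ N ∈ s, c N * WT (Ts N) q v := by
  unfold WT
  have e : ∀ idx ∈ (Finset.univ : Finset (Fin r → Fin D)),
      (∑ N ∈ s, c N * Ts N q idx) * ∏ k, v (idx k)
        = ∑ N ∈ s, c N * (Ts N q idx * ∏ k, v (idx k)) := by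
    intro idx _
    rw [Finset.sum_mul]
    exact Finset.sum_congr rfl fun N _ => by ring
  rw [Finset.sum_congr rfl e, Finset.sum_comm]
  exact Finset.sum_congr rfl fun N _ => (Finset.mul_sum _ _ _).symm

lemma Icc_to_range (ℓ : ℕ) (f : ℕ → ℝ) :
    (∑ N ∈ Finset.Icc 1 ℓ, f N) = ∑ M ∈ Finset.range ℓ, f (M+1) := by
  induction ℓ with
  | zero => simp
  | succ n ih => rw [Finset.sum_Icc_succ_top (by omega), ih, Finset.sum_range_succ]

end Helpers

/-- complete form `J^{(2ν+1,2)}_ℓ`, odd order `m = 2ν+1`.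
`L N r` represents `L_{(N)i₁...i_r}`.  The admissible components are
`L_{(2N)}` at odd ranks `r ∈ {1,…,2ν+1}` with `0 ≤ N ≤ ℓ` and `L_{(2N−1)}`
at even ranks `r ∈ {2,…,2ν}` with `1 ≤ N ≤ ℓ`; all other components are absent,
i.e. vanish, which encodes the "present only if" conventions. -/
theorem stmt10 {D : ℕ} (ν ℓ : ℕ) (hν : 1 ≤ ν)
    (Γ : Conn D) (Q : Vec D → Fin D → ℝ)
    (hΓsym : ∀ q a b c, Γ q a b c = Γ q a c b)
    (hΓ : ∀ a b c, ContDiff ℝ (⊤ : ℕ∞) fun q => Γ q a b c)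
    (hQ : ∀ a, ContDiff ℝ (⊤ : ℕ∞) fun q => Q q a)
    (L : ℕ → (r : ℕ) → Tens D r) (s₀ : ℝ)
    (hLsm : ∀ N r, SmoothTens (L N r))
    (hLsym : ∀ N r, IsSymTens (L N r))
    (hL0 : ∀ N r, r = 0 ∨ 2 * ν + 1 < r ∨ 2 * ℓ < N ∨ N % 2 = r % 2 →
      L N r = fun _ _ => 0)
    -- (i) `L_{(0)i₁...i_{2ν+1}}` is a (2ν+1)-th order generalized KT, and for
    -- `ℓ > 0`, `N = 1,…,ℓ`:
    -- `L_{(2N)i₁...i_{2ν+1}} = −(1/(2N)) L_{(2N−1)(i₁...i_{2ν}|i_{2ν+1})}` are (2ν+1)-th order KTs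
    (hKT0 : IsGenKT Γ (L 0 (2 * ν + 1)))
    (hrec : ∀ N, 1 ≤ N → N ≤ ℓ →
      (∀ q (idx : Fin (2 * ν + 1) → Fin D),
        L (2 * N) (2 * ν + 1) q idx =
          -(1 / (2 * (N : ℝ))) * symT (covTens Γ (L (2 * N - 1) (2 * ν))) q idx) ∧
      IsGenKT Γ (L (2 * N) (2 * ν + 1)))
    -- (ii) `s₀ = L_{(2ℓ)a}Q^a` is a constant
    (hs₀ : ∀ q, dotQ (L (2 * ℓ) 1) Q q = s₀)
    -- (iii) for `ℓ > 0`, `N = 1,…,ℓ`: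
    -- `(L_{(2N−2)c}Q^c)_{,i₁} = 2(2N−1) L_{(2N−1)i₁i₂}Q^{i₂} − 2N(2N−1) L_{(2N)i₁}`
    (hc1 : ∀ N, 1 ≤ N → N ≤ ℓ → ∀ q (i : Fin D),
      pd i (dotQ (L (2 * N - 2) 1) Q) q =
        2 * (2 * (N : ℝ) - 1) * (∑ j, L (2 * N - 1) 2 q ![i, j] * Q q j)
          - 2 * (N : ℝ) * (2 * (N : ℝ) - 1) * L (2 * N) 1 q fun _ => i)
    -- (iv) for even ranks `r = 2i+2 ∈ {2,…,2ν}` and `N = 0,…,ℓ`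
    -- (the last term present only if `N < ℓ`)
    (hc2 : ∀ N, N ≤ ℓ → ∀ i : ℕ, 2 * i + 2 ≤ 2 * ν →
      ∀ q (idx : Fin (2 * i + 2) → Fin D),
        symT (covTens Γ (L (2 * N) (2 * i + 1))) q idx =
          ((2 * i + 3 : ℕ) : ℝ) * (∑ j, L (2 * N) (2 * i + 3) q (Fin.snoc idx j) * Q q j)
            - (2 * (N : ℝ) + 1) * L (2 * N + 1) (2 * i + 2) q idx)
    -- (v) for odd ranks `r = 2i+3 ∈ {3,…,2ν−1}` and `N = 1,…,ℓ`
    (hc3 : ∀ N, 1 ≤ N → N ≤ ℓ → ∀ i : ℕ, 2 * i + 4 ≤ 2 * ν →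
      ∀ q (idx : Fin (2 * i + 3) → Fin D),
        symT (covTens Γ (L (2 * N - 1) (2 * i + 2))) q idx =
          ((2 * i + 4 : ℕ) : ℝ) * (∑ j, L (2 * N - 1) (2 * i + 4) q (Fin.snoc idx j) * Q q j)
            - 2 * (N : ℝ) * L (2 * N) (2 * i + 3) q idx) :
    FirstIntegral Γ Q (fun t q v =>
      (∑ j ∈ Finset.range (ν + 1), ∑ idx : Fin (2 * j + 1) → Fin D,
        (∑ N ∈ Finset.range (ℓ + 1), t ^ (2 * N) * L (2 * N) (2 * j + 1) q idx) *
          ∏ k : Fin (2 * j + 1), v (idx k))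
      + (∑ j ∈ Finset.range ν, ∑ idx : Fin (2 * j + 2) → Fin D,
        (∑ N ∈ Finset.Icc 1 ℓ, t ^ (2 * N - 1) * L (2 * N - 1) (2 * j + 2) q idx) *
          ∏ k : Fin (2 * j + 2), v (idx k))
      + s₀ * t ^ (2 * ℓ + 1) / ((2 * ℓ + 1 : ℕ) : ℝ)
      + (∑ N ∈ Finset.range ℓ,
          dotQ (L (2 * N) 1) Q q * t ^ (2 * N + 1) / ((2 * N + 1 : ℕ) : ℝ))) := by
  
  intro a b q v hsol t₁ ht₁ t₂ ht₂
  have hzero : ∀ t ∈ Set.Ioo a b, HasDerivAt (fun τ =>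
      (∑ j ∈ Finset.range (ν + 1), ∑ idx : Fin (2 * j + 1) → Fin D,
        (∑ N ∈ Finset.range (ℓ + 1), τ ^ (2 * N) * L (2 * N) (2 * j + 1) (q τ) idx) *
          ∏ k : Fin (2 * j + 1), v τ (idx k))
      + (∑ j ∈ Finset.range ν, ∑ idx : Fin (2 * j + 2) → Fin D,
        (∑ N ∈ Finset.Icc 1 ℓ, τ ^ (2 * N - 1) * L (2 * N - 1) (2 * j + 2) (q τ) idx) *
          ∏ k : Fin (2 * j + 2), v τ (idx k))
      + s₀ * τ ^ (2 * ℓ + 1) / ((2 * ℓ + 1 : ℕ) : ℝ)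
      + (∑ N ∈ Finset.range ℓ,
          dotQ (L (2 * N) 1) Q (q τ) * τ ^ (2 * N + 1) / ((2 * N + 1 : ℕ) : ℝ))) 0 t := by
    intro t ht
    have hq : ∀ a', HasDerivAt (fun τ => q τ a') (v t a') t := fun a' => (hsol t ht a').1
    have hv : ∀ a', HasDerivAt (fun τ => v τ a')
        (-(∑ b', ∑ c', Γ (q t) a' b' c' * v t b' * v t c') - Q (q t) a') t :=
      fun a' => (hsol t ht a').2
    -- reshaped version of the function
    have hgg : (fun τ =>
        (∑ j ∈ Finset.range (ν + 1), ∑ idx : Fin (2 * j + 1) → Fin D,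
          (∑ N ∈ Finset.range (ℓ + 1), τ ^ (2 * N) * L (2 * N) (2 * j + 1) (q τ) idx) *
            ∏ k : Fin (2 * j + 1), v τ (idx k))
        + (∑ j ∈ Finset.range ν, ∑ idx : Fin (2 * j + 2) → Fin D,
          (∑ N ∈ Finset.Icc 1 ℓ, τ ^ (2 * N - 1) * L (2 * N - 1) (2 * j + 2) (q τ) idx) *
            ∏ k : Fin (2 * j + 2), v τ (idx k))
        + s₀ * τ ^ (2 * ℓ + 1) / ((2 * ℓ + 1 : ℕ) : ℝ)
        + (∑ N ∈ Finset.range ℓ,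
            dotQ (L (2 * N) 1) Q (q τ) * τ ^ (2 * N + 1) / ((2 * N + 1 : ℕ) : ℝ)))
        = (fun τ =>
        (∑ j ∈ Finset.range (ν + 1), ∑ N ∈ Finset.range (ℓ + 1),
          τ ^ (2 * N) * WT (L (2 * N) (2 * j + 1)) (q τ) (v τ))
        + (∑ j ∈ Finset.range ν, ∑ M ∈ Finset.range ℓ,
          τ ^ (2 * M + 1) * WT (L (2 * M + 1) (2 * j + 2)) (q τ) (v τ))
        + s₀ * τ ^ (2 * ℓ + 1) / ((2 * ℓ + 1 : ℕ) : ℝ)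
        + (∑ N ∈ Finset.range ℓ,
            dotQ (L (2 * N) 1) Q (q τ) * τ ^ (2 * N + 1) / ((2 * N + 1 : ℕ) : ℝ))) := by
      funext τ
      congr 1
      congr 1
      congr 1
      · exact Finset.sum_congr rfl fun j _ =>
          sum_reshape (Finset.range (ℓ+1)) (fun N => τ ^ (2*N))
            (fun N => L (2*N) (2*j+1)) (q τ) (v τ)
      · rw [Finset.sum_congr rfl fun j _ =>
          sum_reshape (Finset.Icc 1 ℓ) (fun N => τ ^ (2*N-1))
            (fun N => L (2*N-1) (2*j+2)) (q τ) (v τ)]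
        refine Finset.sum_congr rfl fun j _ => ?_
        rw [Icc_to_range ℓ (fun N => τ^(2*N-1) * WT (L (2*N-1) (2*j+2)) (q τ) (v τ))]
        refine Finset.sum_congr rfl fun M _ => ?_
        rw [show 2*(M+1)-1 = 2*M+1 from by omega]
    -- derivatives of the four pieces
    have hD1 : HasDerivAt (fun τ => ∑ j ∈ Finset.range (ν+1), ∑ N ∈ Finset.range (ℓ+1),
          τ ^ (2*N) * WT (L (2*N) (2*j+1)) (q τ) (v τ))
        (∑ j ∈ Finset.range (ν+1), ∑ N ∈ Finset.range (ℓ+1),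
          (((2*N : ℕ) : ℝ) * t^(2*N-1) * WT (L (2*N) (2*j+1)) (q t) (v t)
            + t^(2*N) * (CT Γ (L (2*N) (2*j+1)) (q t) (v t)
              - ∑ k : Fin (2*j+1), ∑ idx : Fin (2*j+1) → Fin D, L (2*N) (2*j+1) (q t) idx *
                  ((∏ l ∈ Finset.univ.erase k, v t (idx l)) * Q (q t) (idx k))))) t :=
      HasDerivAt.fun_sum fun j _ => HasDerivAt.fun_sum fun N _ =>
        term_hasDerivAt Γ Q (L (2*N) (2*j+1)) (hLsm _ _) (2*N) q v t hq hv
    have hD2 : HasDerivAt (fun τ => ∑ j ∈ Finset.range ν, ∑ M ∈ Finset.range ℓ,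
          τ ^ (2*M+1) * WT (L (2*M+1) (2*j+2)) (q τ) (v τ))
        (∑ j ∈ Finset.range ν, ∑ M ∈ Finset.range ℓ,
          (((2*M+1 : ℕ) : ℝ) * t^(2*M+1-1) * WT (L (2*M+1) (2*j+2)) (q t) (v t)
            + t^(2*M+1) * (CT Γ (L (2*M+1) (2*j+2)) (q t) (v t)
              - ∑ k : Fin (2*j+2), ∑ idx : Fin (2*j+2) → Fin D, L (2*M+1) (2*j+2) (q t) idx *
                  ((∏ l ∈ Finset.univ.erase k, v t (idx l)) * Q (q t) (idx k))))) t :=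
      HasDerivAt.fun_sum fun j _ => HasDerivAt.fun_sum fun M _ =>
        term_hasDerivAt Γ Q (L (2*M+1) (2*j+2)) (hLsm _ _) (2*M+1) q v t hq hv
    have hD3 : HasDerivAt (fun τ => s₀ * τ ^ (2*ℓ+1) / ((2*ℓ+1 : ℕ) : ℝ))
        ((s₀ * (((2*ℓ+1 : ℕ) : ℝ) * t^(2*ℓ+1-1))) / ((2*ℓ+1 : ℕ) : ℝ)) t :=
      (HasDerivAt.const_mul s₀ (hasDerivAt_pow (2*ℓ+1) t)).div_const _
    have hD4 : HasDerivAt (fun τ => ∑ N ∈ Finset.range ℓ,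
          dotQ (L (2*N) 1) Q (q τ) * τ ^ (2*N+1) / ((2*N+1 : ℕ) : ℝ))
        (∑ N ∈ Finset.range ℓ,
          ((∑ i, pd i (dotQ (L (2*N) 1) Q) (q t) * v t i) * t^(2*N+1)
            + dotQ (L (2*N) 1) Q (q t) * (((2*N+1 : ℕ) : ℝ) * t^(2*N+1-1)))
              / ((2*N+1 : ℕ) : ℝ)) t :=
      HasDerivAt.fun_sum fun N _ =>
        ((hasDerivAt_comp_smooth _ (contDiff_dotQ _ _ (hLsm _ _) hQ) q (v t) t hq).mul
          (hasDerivAt_pow (2*N+1) t)).div_const _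
    have htot := ((hD1.add hD2).add hD3).add hD4
    -- Q-term contractions
    have hQPodd : ∀ (j N : ℕ),
        (∑ k : Fin (2*j+1), ∑ idx : Fin (2*j+1) → Fin D, L (2*N) (2*j+1) (q t) idx *
          ((∏ l ∈ Finset.univ.erase k, v t (idx l)) * Q (q t) (idx k)))
        = (((2*j : ℕ) : ℝ)+1) * BT (r := 2*j) (L (2*N) (2*j+1)) Q (q t) (v t) :=
      fun j N => sum_Q_contract (L (2*N) (2*j+1)) (hLsym _ _) (q t) (v t) (Q (q t))
    have hQPeven : ∀ (j M : ℕ),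
        (∑ k : Fin (2*j+2), ∑ idx : Fin (2*j+2) → Fin D, L (2*M+1) (2*j+2) (q t) idx *
          ((∏ l ∈ Finset.univ.erase k, v t (idx l)) * Q (q t) (idx k)))
        = (((2*j+1 : ℕ) : ℝ)+1) * BT (r := 2*j+1) (L (2*M+1) (2*j+2)) Q (q t) (v t) :=
      fun j M => sum_Q_contract (L (2*M+1) (2*j+2)) (hLsym _ _) (q t) (v t) (Q (q t))
    -- covariant-derivative contractions
    have hCodd : ∀ (N j : ℕ), N ≤ ℓ → j ≤ ν →
        CT Γ (L (2*N) (2*j+1)) (q t) (v t)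
        = ((2*j+3 : ℕ) : ℝ) * BT (r := 2*j+2) (L (2*N) (2*j+3)) Q (q t) (v t)
          - (2*(N:ℝ)+1) * WT (L (2*N+1) (2*j+2)) (q t) (v t) := by
      intro N j hN hj
      rcases Nat.lt_or_ge j ν with hj' | hj'
      · have h2 : 2*j+2 ≤ 2*ν := by omega
        calc CT Γ (L (2*N) (2*j+1)) (q t) (v t)
            = ∑ idx : Fin (2*j+2) → Fin D,
                symT (covTens Γ (L (2*N) (2*j+1))) (q t) idx * ∏ k, v t (idx k) :=
              CT_eq_symT Γ (L (2*N) (2*j+1)) (q t) (v t)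
          _ = ∑ idx : Fin (2*j+2) → Fin D,
                (((2*j+3 : ℕ) : ℝ) * (∑ m, L (2*N) (2*j+3) (q t) (Fin.snoc idx m) * Q (q t) m)
                  - (2*(N:ℝ)+1) * L (2*N+1) (2*j+2) (q t) idx) * ∏ k, v t (idx k) :=
              Finset.sum_congr rfl fun idx _ => by rw [hc2 N hN j h2 (q t) idx]
          _ = _ := by
              unfold BT WT
              rw [Finset.mul_sum, Finset.mul_sum, ← Finset.sum_sub_distrib]
              refine Finset.sum_congr rfl fun idx _ => ?_
              rw [← Finset.sum_mul]
              ring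
      · have hjν : j = ν := le_antisymm hj hj'
        subst hjν
        have hz : ∀ idx : Fin (2*j+2) → Fin D,
            symT (covTens Γ (L (2*N) (2*j+1))) (q t) idx = 0 := by
          intro idx
          rcases Nat.eq_zero_or_pos N with rfl | hN1
          · exact hKT0 (q t) idx
          · exact (hrec N hN1 hN).2 (q t) idx
        calc CT Γ (L (2*N) (2*j+1)) (q t) (v t)
            = ∑ idx : Fin (2*j+2) → Fin D,
                symT (covTens Γ (L (2*N) (2*j+1))) (q t) idx * ∏ k, v t (idx k) :=
              CT_eq_symT Γ (L (2*N) (2*j+1)) (q t) (v t)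
          _ = 0 := Finset.sum_eq_zero fun idx _ => by rw [hz idx, zero_mul]
          _ = _ := by
              rw [BT_of_zero (L (2*N) (2*j+3)) (hL0 (2*N) (2*j+3) (by omega)) Q (q t) (v t),
                WT_of_zero (L (2*N+1) (2*j+2)) (hL0 (2*N+1) (2*j+2) (by omega)) (q t) (v t)]
              ring
    have hCeven : ∀ (M j : ℕ), M < ℓ → j < ν →
        CT Γ (L (2*M+1) (2*j+2)) (q t) (v t)
        = ((2*j+4 : ℕ) : ℝ) * BT (r := 2*j+3) (L (2*M+1) (2*j+4)) Q (q t) (v t)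
          - (2*(M:ℝ)+2) * WT (L (2*M+2) (2*j+3)) (q t) (v t) := by
      intro M j hM hj
      rcases Nat.lt_or_ge (2*j+4) (2*ν+1) with h4 | h4
      · have hc3' := hc3 (M+1) (by omega) (by omega) j (by omega) (q t)
        rw [show 2*(M+1)-1 = 2*M+1 from by omega,
          show 2*(M+1) = 2*M+2 from by ring] at hc3'
        calc CT Γ (L (2*M+1) (2*j+2)) (q t) (v t)
            = ∑ idx : Fin (2*j+3) → Fin D,
                symT (covTens Γ (L (2*M+1) (2*j+2))) (q t) idx * ∏ k, v t (idx k) :=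
              CT_eq_symT Γ (L (2*M+1) (2*j+2)) (q t) (v t)
          _ = ∑ idx : Fin (2*j+3) → Fin D,
                (((2*j+4 : ℕ) : ℝ) * (∑ m, L (2*M+1) (2*j+4) (q t) (Fin.snoc idx m) * Q (q t) m)
                  - 2*(((M+1 : ℕ)) : ℝ) * L (2*M+2) (2*j+3) (q t) idx) * ∏ k, v t (idx k) :=
              Finset.sum_congr rfl fun idx _ => by rw [hc3' idx]
          _ = ((2*j+4 : ℕ) : ℝ) * BT (r := 2*j+3) (L (2*M+1) (2*j+4)) Q (q t) (v t)
                - 2*(((M+1 : ℕ)) : ℝ) * WT (L (2*M+2) (2*j+3)) (q t) (v t) := by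
              unfold BT WT
              rw [Finset.mul_sum, Finset.mul_sum, ← Finset.sum_sub_distrib]
              refine Finset.sum_congr rfl fun idx _ => ?_
              rw [← Finset.sum_mul]
              ring
          _ = _ := by push_cast; ring
      · have hjν : ν = j+1 := by omega
        subst hjν
        have hr := (hrec (M+1) (by omega) (by omega)).1
        rw [show 2*(M+1)-1 = 2*M+1 from by omega,
          show 2*(j+1) = 2*j+2 from by ring,
          show 2*(M+1) = 2*M+2 from by ring] at hr
        have hz : ∀ idx : Fin (2*j+3) → Fin D,
            symT (covTens Γ (L (2*M+1) (2*j+2))) (q t) idx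
              = -(2*((M:ℝ)+1)) * L (2*M+2) (2*j+3) (q t) idx := by
          intro idx
          have h := hr (q t) idx
          rw [h]
          push_cast
          have hcM : ((M:ℝ)+1) ≠ 0 := by positivity
          field_simp
        calc CT Γ (L (2*M+1) (2*j+2)) (q t) (v t)
            = ∑ idx : Fin (2*j+3) → Fin D,
                symT (covTens Γ (L (2*M+1) (2*j+2))) (q t) idx * ∏ k, v t (idx k) :=
              CT_eq_symT Γ (L (2*M+1) (2*j+2)) (q t) (v t)
          _ = ∑ idx : Fin (2*j+3) → Fin D,
                (-(2*((M:ℝ)+1)) * L (2*M+2) (2*j+3) (q t) idx) * ∏ k, v t (idx k) :=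
              Finset.sum_congr rfl fun idx _ => by rw [hz idx]
          _ = -(2*((M:ℝ)+1)) * WT (L (2*M+2) (2*j+3)) (q t) (v t) := by
              unfold WT
              rw [Finset.mul_sum]
              exact Finset.sum_congr rfl fun idx _ => by ring
          _ = _ := by
              rw [BT_of_zero (L (2*M+1) (2*j+4)) (hL0 (2*M+1) (2*j+4) (by omega)) Q (q t) (v t)]
              ring
    -- scalar-sector identities
    have hchain : ∀ N : ℕ, N < ℓ →
        (∑ i, pd i (dotQ (L (2*N) 1) Q) (q t) * v t i)
        = 2*(2*(N:ℝ)+1) * BT (r := 1) (L (2*N+1) 2) Q (q t) (v t)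
          - 2*((N:ℝ)+1)*(2*(N:ℝ)+1) * WT (L (2*N+2) 1) (q t) (v t) := by
      intro N hN
      have h := hc1 (N+1) (by omega) (by omega) (q t)
      rw [show 2*(N+1)-2 = 2*N from by omega, show 2*(N+1)-1 = 2*N+1 from by omega,
        show 2*(N+1) = 2*N+2 from by ring] at h
      rw [BT_one_eq, WT_one_eq, Finset.mul_sum, Finset.mul_sum, ← Finset.sum_sub_distrib]
      refine Finset.sum_congr rfl fun i _ => ?_
      rw [h i]
      push_cast
      ring
    -- vanishing components for the master identity
    have hA1' : ∀ j : ℕ, WT (L (2*ℓ+1) (2*j+2)) (q t) (v t) = 0 := fun j =>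
      WT_of_zero _ (hL0 _ _ (by omega)) _ _
    have hAtop' : ∀ N : ℕ, WT (L N (2*ν+2)) (q t) (v t) = 0 := fun N =>
      WT_of_zero _ (hL0 _ _ (by omega)) _ _
    have hB2' : ∀ N : ℕ, BT (r := 2*ν+2) (L N (2*ν+3)) Q (q t) (v t) = 0 := fun N =>
      BT_of_zero (r := 2*ν+2) (L N (2*ν+3)) (hL0 N (2*ν+3) (by omega)) Q (q t) (v t)
    have hB1' : ∀ N : ℕ, BT (r := 2*ν+1) (L N (2*ν+2)) Q (q t) (v t) = 0 := fun N =>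
      BT_of_zero (r := 2*ν+1) (L N (2*ν+2)) (hL0 N (2*ν+2) (by omega)) Q (q t) (v t)
    have hM := master t ν ℓ (fun N r => WT (L N r) (q t) (v t))
      (fun N s => BT (r := s) (L N (s+1)) Q (q t) (v t)) hA1' hAtop' hB2' hB1'
    -- the total derivative vanishes
    have hE : (∑ j ∈ Finset.range (ν+1), ∑ N ∈ Finset.range (ℓ+1),
          (((2*N : ℕ) : ℝ) * t^(2*N-1) * WT (L (2*N) (2*j+1)) (q t) (v t)
            + t^(2*N) * (CT Γ (L (2*N) (2*j+1)) (q t) (v t)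
              - ∑ k : Fin (2*j+1), ∑ idx : Fin (2*j+1) → Fin D, L (2*N) (2*j+1) (q t) idx *
                  ((∏ l ∈ Finset.univ.erase k, v t (idx l)) * Q (q t) (idx k)))))
        + (∑ j ∈ Finset.range ν, ∑ M ∈ Finset.range ℓ,
          (((2*M+1 : ℕ) : ℝ) * t^(2*M+1-1) * WT (L (2*M+1) (2*j+2)) (q t) (v t)
            + t^(2*M+1) * (CT Γ (L (2*M+1) (2*j+2)) (q t) (v t)
              - ∑ k : Fin (2*j+2), ∑ idx : Fin (2*j+2) → Fin D, L (2*M+1) (2*j+2) (q t) idx *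
                  ((∏ l ∈ Finset.univ.erase k, v t (idx l)) * Q (q t) (idx k)))))
        + (s₀ * (((2*ℓ+1 : ℕ) : ℝ) * t^(2*ℓ+1-1))) / ((2*ℓ+1 : ℕ) : ℝ)
        + (∑ N ∈ Finset.range ℓ,
          ((∑ i, pd i (dotQ (L (2*N) 1) Q) (q t) * v t i) * t^(2*N+1)
            + dotQ (L (2*N) 1) Q (q t) * (((2*N+1 : ℕ) : ℝ) * t^(2*N+1-1)))
              / ((2*N+1 : ℕ) : ℝ)) = 0 := by
      have h1 : (∑ j ∈ Finset.range (ν+1), ∑ N ∈ Finset.range (ℓ+1),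
          (((2*N : ℕ) : ℝ) * t^(2*N-1) * WT (L (2*N) (2*j+1)) (q t) (v t)
            + t^(2*N) * (CT Γ (L (2*N) (2*j+1)) (q t) (v t)
              - ∑ k : Fin (2*j+1), ∑ idx : Fin (2*j+1) → Fin D, L (2*N) (2*j+1) (q t) idx *
                  ((∏ l ∈ Finset.univ.erase k, v t (idx l)) * Q (q t) (idx k)))))
          = ∑ j ∈ Finset.range (ν+1), ∑ N ∈ Finset.range (ℓ+1),
            (((2*N : ℕ) : ℝ) * t^(2*N-1) * WT (L (2*N) (2*j+1)) (q t) (v t)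
              + t^(2*N) * (((2*j+3 : ℕ) : ℝ) * BT (r := 2*j+2) (L (2*N) (2*j+3)) Q (q t) (v t)
                  - (2*(N:ℝ)+1) * WT (L (2*N+1) (2*j+2)) (q t) (v t)
                  - ((2*j+1 : ℕ) : ℝ) * BT (r := 2*j) (L (2*N) (2*j+1)) Q (q t) (v t))) := by
        refine Finset.sum_congr rfl fun j hj => Finset.sum_congr rfl fun N hN => ?_
        rw [hCodd N j (by exact Nat.lt_succ_iff.mp (Finset.mem_range.mp hN))
          (by exact Nat.lt_succ_iff.mp (Finset.mem_range.mp hj)), hQPodd j N]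
        push_cast
        ring
      have h2 : (∑ j ∈ Finset.range ν, ∑ M ∈ Finset.range ℓ,
          (((2*M+1 : ℕ) : ℝ) * t^(2*M+1-1) * WT (L (2*M+1) (2*j+2)) (q t) (v t)
            + t^(2*M+1) * (CT Γ (L (2*M+1) (2*j+2)) (q t) (v t)
              - ∑ k : Fin (2*j+2), ∑ idx : Fin (2*j+2) → Fin D, L (2*M+1) (2*j+2) (q t) idx *
                  ((∏ l ∈ Finset.univ.erase k, v t (idx l)) * Q (q t) (idx k)))))
          = ∑ j ∈ Finset.range ν, ∑ M ∈ Finset.range ℓ,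
            ((2*(M:ℝ)+1) * t^(2*M) * WT (L (2*M+1) (2*j+2)) (q t) (v t)
              + t^(2*M+1) * (((2*j+4 : ℕ) : ℝ) * BT (r := 2*j+3) (L (2*M+1) (2*j+4)) Q (q t) (v t)
                  - (2*(M:ℝ)+2) * WT (L (2*M+2) (2*j+3)) (q t) (v t)
                  - ((2*j+2 : ℕ) : ℝ) * BT (r := 2*j+1) (L (2*M+1) (2*j+2)) Q (q t) (v t))) := by
        refine Finset.sum_congr rfl fun j hj => Finset.sum_congr rfl fun M hM => ?_
        rw [hCeven M j (Finset.mem_range.mp hM) (Finset.mem_range.mp hj), hQPeven j M,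
          show 2*M+1-1 = 2*M from by omega]
        push_cast
        ring
      have h3 : (s₀ * (((2*ℓ+1 : ℕ) : ℝ) * t^(2*ℓ+1-1))) / ((2*ℓ+1 : ℕ) : ℝ)
          = BT (r := 0) (L (2*ℓ) 1) Q (q t) (v t) * t^(2*ℓ) := by
        rw [show 2*ℓ+1-1 = 2*ℓ from by omega, BT_zero_eq_dotQ, hs₀ (q t)]
        have hc : ((2*ℓ+1 : ℕ) : ℝ) ≠ 0 := by positivity
        field_simp
      have h4 : (∑ N ∈ Finset.range ℓ,
          ((∑ i, pd i (dotQ (L (2*N) 1) Q) (q t) * v t i) * t^(2*N+1)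
            + dotQ (L (2*N) 1) Q (q t) * (((2*N+1 : ℕ) : ℝ) * t^(2*N+1-1)))
              / ((2*N+1 : ℕ) : ℝ))
          = ∑ N ∈ Finset.range ℓ,
            (2 * t^(2*N+1) * BT (r := 1) (L (2*N+1) 2) Q (q t) (v t)
              - (2*(N:ℝ)+2) * t^(2*N+1) * WT (L (2*N+2) 1) (q t) (v t)
              + t^(2*N) * BT (r := 0) (L (2*N) 1) Q (q t) (v t)) := by
        refine Finset.sum_congr rfl fun N hN => ?_
        rw [hchain N (Finset.mem_range.mp hN), show 2*N+1-1 = 2*N from by omega,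
          ← BT_zero_eq_dotQ (L (2*N) 1) Q (q t) (v t)]
        have hc : ((2*N+1 : ℕ) : ℝ) ≠ 0 := by positivity
        field_simp
        push_cast
        ring
      rw [h1, h2, h3, h4]
      exact hM
    rw [hgg]
    exact hE ▸ htot
  -- conclude constancy on the interval
  have const : ∀ s₁ s₂, s₁ ∈ Set.Ioo a b → s₂ ∈ Set.Ioo a b → s₁ ≤ s₂ →
      (fun τ =>
      (∑ j ∈ Finset.range (ν + 1), ∑ idx : Fin (2 * j + 1) → Fin D,
        (∑ N ∈ Finset.range (ℓ + 1), τ ^ (2 * N) * L (2 * N) (2 * j + 1) (q τ) idx) *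
          ∏ k : Fin (2 * j + 1), v τ (idx k))
      + (∑ j ∈ Finset.range ν, ∑ idx : Fin (2 * j + 2) → Fin D,
        (∑ N ∈ Finset.Icc 1 ℓ, τ ^ (2 * N - 1) * L (2 * N - 1) (2 * j + 2) (q τ) idx) *
          ∏ k : Fin (2 * j + 2), v τ (idx k))
      + s₀ * τ ^ (2 * ℓ + 1) / ((2 * ℓ + 1 : ℕ) : ℝ)
      + (∑ N ∈ Finset.range ℓ,
          dotQ (L (2 * N) 1) Q (q τ) * τ ^ (2 * N + 1) / ((2 * N + 1 : ℕ) : ℝ))) s₂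
      = (fun τ =>
      (∑ j ∈ Finset.range (ν + 1), ∑ idx : Fin (2 * j + 1) → Fin D,
        (∑ N ∈ Finset.range (ℓ + 1), τ ^ (2 * N) * L (2 * N) (2 * j + 1) (q τ) idx) *
          ∏ k : Fin (2 * j + 1), v τ (idx k))
      + (∑ j ∈ Finset.range ν, ∑ idx : Fin (2 * j + 2) → Fin D,
        (∑ N ∈ Finset.Icc 1 ℓ, τ ^ (2 * N - 1) * L (2 * N - 1) (2 * j + 2) (q τ) idx) *
          ∏ k : Fin (2 * j + 2), v τ (idx k))
      + s₀ * τ ^ (2 * ℓ + 1) / ((2 * ℓ + 1 : ℕ) : ℝ)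
      + (∑ N ∈ Finset.range ℓ,
          dotQ (L (2 * N) 1) Q (q τ) * τ ^ (2 * N + 1) / ((2 * N + 1 : ℕ) : ℝ))) s₁ := by
    intro s₁ s₂ h₁ h₂ h12
    have hsub : Set.Icc s₁ s₂ ⊆ Set.Ioo a b := fun x hx =>
      ⟨lt_of_lt_of_le h₁.1 hx.1, lt_of_le_of_lt hx.2 h₂.2⟩
    exact constant_of_has_deriv_right_zero
      (fun x hx => (hzero x (hsub hx)).continuousAt.continuousWithinAt)
      (fun x hx => (hzero x (hsub (Set.Ico_subset_Icc_self hx))).hasDerivWithinAt)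
      s₂ (Set.right_mem_Icc.2 h12)
  rcases le_total t₁ t₂ with h | h
  · exact (const t₁ t₂ ht₁ ht₂ h).symm
  · exact const t₂ t₁ ht₂ ht₁ h
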